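/- There exists a constant c > 0 such that for every positive integer n and every finite set {p₁, …, p_k} of primes with each pᵢ ≤ n, the number of positive integers m ≤ n not divisible by any of p₁, …, p_k is at most c·n·∏_{i=1}^{k}(1 − 1/pᵢ). -/

import Mathlib

open scoped Classical

open Finset ArithmeticFunction

-- injection comparison helper
lemma sum_le_sum_inj {α β : Type*} [DecidableEq β] (s : Finset α) (t : Finset β)
    (i : α → β) (f : α → ℝ) (g : β → ℝ)
    (hinj : ∀ a₁ ∈ s, ∀ a₂ ∈ s, i a₁ = i a₂ → a₁ = a₂)
    (hmap : ∀ a ∈ s, i a ∈ t) (hfg : ∀ a ∈ s, f a ≤ g (i a))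
    (hg : ∀ b ∈ t, 0 ≤ g b) : ∑ a ∈ s, f a ≤ ∑ b ∈ t, g b := by
  calc ∑ a ∈ s, f a ≤ ∑ a ∈ s, g (i a) := Finset.sum_le_sum hfg
    _ = ∑ b ∈ s.image i, g b := (Finset.sum_image hinj).symm
    _ ≤ ∑ b ∈ t, g b := Finset.sum_le_sum_of_subset_of_nonneg
        (Finset.image_subset_iff.mpr hmap) (fun b hb _ => hg b hb)

-- Chebyshev θ
lemma theta_le (M : ℕ) :
    ∑ p ∈ (Finset.range (M+1)).filter Nat.Prime, Real.log p ≤ M * Real.log 4 := by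
  have h1 : ∑ p ∈ (Finset.range (M+1)).filter Nat.Prime, Real.log p
      = Real.log (primorial M) := by
    rw [primorial, Nat.cast_prod, Real.log_prod]
    intro p hp
    have := (Finset.mem_filter.mp hp).2.pos
    positivity
  have h2 : (primorial M : ℝ) ≤ (4:ℝ) ^ M := by
    exact_mod_cast primorial_le_4_pow M
  rw [h1]
  calc Real.log (primorial M) ≤ Real.log ((4:ℝ)^M) := by
        apply Real.log_le_log (by exact_mod_cast primorial_pos M) h2
    _ = M * Real.log 4 := by rw [Real.log_pow]

lemma sq_le_four_pow (k : ℕ) : (k+1)^2 ≤ 4^k := by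
  induction k with
  | zero => norm_num
  | succ k ih =>
    have h : (k+2)^2 ≤ 4*(k+1)^2 := by ring_nf; nlinarith [sq_nonneg k, Nat.zero_le k]
    calc (k+1+1)^2 ≤ 4*(k+1)^2 := h
      _ ≤ 4*4^k := by omega
      _ = 4^(k+1) := by ring

lemma log2_le_two_sqrt (N : ℕ) (hN : N ≠ 0) : Nat.log 2 N ≤ 2 * Nat.sqrt N := by
  have h1 : N < (Nat.sqrt N + 1)^2 := Nat.lt_succ_sqrt' N
  have h2 : (Nat.sqrt N + 1)^2 ≤ 4^(Nat.sqrt N) := sq_le_four_pow _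
  have h3 : N < 2^(2 * Nat.sqrt N) := by
    calc N < (Nat.sqrt N + 1)^2 := h1
      _ ≤ 4^(Nat.sqrt N) := h2
      _ = 2^(2*Nat.sqrt N) := by rw [pow_mul]; norm_num
  exact le_of_lt (Nat.log_lt_of_lt_pow hN h3)

-- telescoping
lemma telescope (j J : ℕ) (hj : 1 ≤ j) (h : j ≤ J) :
    ∑ i ∈ Finset.Ico j J, ((1:ℝ)/i - 1/(i+1)) = 1/j - 1/J := by
  induction J with
  | zero => omega
  | succ J ih =>
    rcases Nat.lt_or_ge j (J+1) with h' | h'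
    · have hjJ : j ≤ J := by omega
      rw [Finset.sum_Ico_succ_top hjJ, ih hjJ]
      push_cast
      ring
    · have : j = J + 1 := by omega
      subst this
      simp

-- swap a triangular double sum
lemma swap_triangle (J : ℕ) (F : ℕ → ℕ → ℝ) :
    ∑ j ∈ Finset.Icc 1 J, ∑ i ∈ Finset.Ico j J, F j i
      = ∑ i ∈ Finset.Ico 1 J, ∑ j ∈ Finset.Icc 1 i, F j i := by
  rw [Finset.sum_sigma', Finset.sum_sigma']
  apply Finset.sum_nbij' (i := fun x => ⟨x.2, x.1⟩) (j := fun x => ⟨x.2, x.1⟩)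
  · rintro ⟨j, i⟩ hx
    simp only [Finset.mem_sigma, Finset.mem_Icc, Finset.mem_Ico] at hx ⊢
    omega
  · rintro ⟨i, j⟩ hx
    simp only [Finset.mem_sigma, Finset.mem_Icc, Finset.mem_Ico] at hx ⊢
    omega
  · rintro ⟨j, i⟩ _; rfl
  · rintro ⟨i, j⟩ _; rfl
  · rintro ⟨j, i⟩ _; rfl

-- sum of 1/i over Ico 1 J
lemma harmonic_bound (J : ℕ) (hJ : 1 ≤ J) :
    ∑ i ∈ Finset.Ico 1 J, (1:ℝ)/i ≤ 1 + Real.log J := by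
  have h1 : Finset.Ico 1 J = Finset.Icc 1 (J-1) := by
    ext i; simp [Finset.mem_Ico, Finset.mem_Icc]; omega
  rw [h1]
  have h2 : ∑ i ∈ Finset.Icc 1 (J-1), (1:ℝ)/i = (harmonic (J-1) : ℝ) := by
    rw [harmonic_eq_sum_Icc]
    push_cast
    apply Finset.sum_congr rfl
    intro i _
    rw [one_div]
  rw [h2]
  calc (harmonic (J-1) : ℝ) ≤ 1 + Real.log (J-1 : ℕ) := harmonic_le_one_add_log _
    _ ≤ 1 + Real.log J := by
      have hlog : Real.log ((J-1:ℕ):ℝ) ≤ Real.log J := by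
        rcases Nat.eq_zero_or_pos (J-1) with h | h
        · rw [h]
          simp only [Nat.cast_zero, Real.log_zero]
          exact Real.log_nonneg (by exact_mod_cast hJ)
        · exact Real.log_le_log (by exact_mod_cast h) (by exact_mod_cast Nat.sub_le J 1)
      linarith

lemma psi_le (N : ℕ) : ∑ q ∈ Finset.Icc 1 N, Λ q ≤ 5 * N := by
  rcases Nat.eq_zero_or_pos N with rfl | hN
  · simp
  have hN0 : N ≠ 0 := hN.ne'
  rw [← Finset.sum_filter_add_sum_filter_not (Finset.Icc 1 N) Nat.Prime]
  have hprime : ∑ q ∈ (Finset.Icc 1 N).filter Nat.Prime, Λ q ≤ N * Real.log 4 := by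
    have heq : (Finset.Icc 1 N).filter Nat.Prime = (Finset.range (N+1)).filter Nat.Prime := by
      ext q
      simp only [Finset.mem_filter, Finset.mem_Icc, Finset.mem_range]
      constructor
      · rintro ⟨⟨h1, h2⟩, hp⟩; exact ⟨by omega, hp⟩
      · rintro ⟨h1, hp⟩; exact ⟨⟨hp.one_lt.le.trans' (by norm_num), by omega⟩, hp⟩
    rw [heq]
    calc ∑ q ∈ (Finset.range (N+1)).filter Nat.Prime, Λ q
        = ∑ q ∈ (Finset.range (N+1)).filter Nat.Prime, Real.log q := by
          apply Finset.sum_congr rfl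
          intro q hq
          exact vonMangoldt_apply_prime (Finset.mem_filter.mp hq).2
      _ ≤ N * Real.log 4 := theta_le N
  have hnonprime : ∑ q ∈ (Finset.Icc 1 N).filter (fun q => ¬ Nat.Prime q), Λ q
      ≤ 2 * N * Real.log 4 := by
    set s := ((Finset.Icc 1 N).filter (fun q => ¬ Nat.Prime q)).filter IsPrimePow with hs
    have hsub : ∑ q ∈ (Finset.Icc 1 N).filter (fun q => ¬ Nat.Prime q), Λ q
        = ∑ q ∈ s, Λ q := by
      rw [hs]
      symm
      apply Finset.sum_subset (Finset.filter_subset _ _)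
      intro q _ hq2
      rw [Finset.mem_filter] at hq2
      by_cases h : IsPrimePow q
      · exact absurd ⟨‹_›, h⟩ hq2
      · rw [vonMangoldt_apply, if_neg h]
    rw [hsub]
    have key : ∑ q ∈ s, Λ q ≤
        ∑ x ∈ ((Finset.range (Nat.sqrt N + 1)).filter Nat.Prime) ×ˢ
          (Finset.Icc 2 (Nat.log 2 N)), Real.log x.1 := by
      apply sum_le_sum_inj s _ (fun q => (q.minFac, q.factorization q.minFac)) _ _
      · -- injectivity
        intro q1 hq1 q2 hq2 h
        have h1 : IsPrimePow q1 := (Finset.mem_filter.mp hq1).2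
        have h2 : IsPrimePow q2 := (Finset.mem_filter.mp hq2).2
        have e1 := h1.minFac_pow_factorization_eq
        have e2 := h2.minFac_pow_factorization_eq
        rw [Prod.mk.injEq] at h
        calc q1 = q1.minFac ^ q1.factorization q1.minFac := e1.symm
          _ = q2.minFac ^ q2.factorization q2.minFac := by rw [h.2, h.1]
          _ = q2 := e2
      · -- maps to
        intro q hq
        have hpp : IsPrimePow q := (Finset.mem_filter.mp hq).2
        have hnp : ¬ q.Prime := (Finset.mem_filter.mp (Finset.mem_filter.mp hq).1).2
        have hqN : q ≤ N := (Finset.mem_Icc.mp (Finset.mem_filter.mp (Finset.mem_filter.mp hq).1).1).2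
        have hq2 : 2 ≤ q := hpp.two_le
        have hp : q.minFac.Prime := Nat.minFac_prime (by omega)
        have heq : q.minFac ^ q.factorization q.minFac = q := hpp.minFac_pow_factorization_eq
        set a := q.factorization q.minFac with ha
        have ha2 : 2 ≤ a := by
          rcases Nat.lt_or_ge a 2 with h | h
          · interval_cases a
            · simp at heq; omega
            · simp at heq; rw [← heq] at hnp; exact absurd hp hnp
          · exact h
        have hpsq : q.minFac * q.minFac ≤ N := by
          calc q.minFac * q.minFac = q.minFac ^ 2 := (sq q.minFac).symm
            _ ≤ q.minFac ^ a := Nat.pow_le_pow_right hp.pos ha2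
            _ = q := heq
            _ ≤ N := hqN
        have h2a : 2 ^ a ≤ N := by
          calc 2^a ≤ q.minFac ^ a := Nat.pow_le_pow_left hp.two_le a
            _ = q := heq
            _ ≤ N := hqN
        simp only [Finset.mem_product, Finset.mem_filter, Finset.mem_range, Finset.mem_Icc]
        refine ⟨⟨?_, hp⟩, ha2, ?_⟩
        · have := Nat.le_sqrt.mpr hpsq; omega
        · exact (Nat.le_log_iff_pow_le one_lt_two hN0).mpr h2a
      · -- value
        intro q hq
        have hpp : IsPrimePow q := (Finset.mem_filter.mp hq).2
        rw [vonMangoldt_apply, if_pos hpp]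
      · -- nonneg
        intro b hb
        have hp : b.1.Prime := (Finset.mem_filter.mp (Finset.mem_product.mp hb).1).2
        exact Real.log_nonneg (by exact_mod_cast hp.one_lt.le)
    refine key.trans ?_
    rw [Finset.sum_product_right]
    have hcard : (Finset.Icc 2 (Nat.log 2 N)).card ≤ 2 * Nat.sqrt N := by
      rw [Nat.card_Icc]
      have := log2_le_two_sqrt N hN0
      omega
    calc ∑ a ∈ Finset.Icc 2 (Nat.log 2 N), ∑ p ∈ (Finset.range (Nat.sqrt N + 1)).filter Nat.Prime,
          Real.log p
        ≤ ∑ _a ∈ Finset.Icc 2 (Nat.log 2 N), (Nat.sqrt N : ℝ) * Real.log 4 := by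
          apply Finset.sum_le_sum
          intro a _
          exact theta_le (Nat.sqrt N)
      _ = ((Finset.Icc 2 (Nat.log 2 N)).card : ℝ) * ((Nat.sqrt N : ℝ) * Real.log 4) := by
          rw [Finset.sum_const, nsmul_eq_mul]
      _ ≤ (2 * Nat.sqrt N : ℝ) * ((Nat.sqrt N : ℝ) * Real.log 4) := by
          apply mul_le_mul_of_nonneg_right
          · exact_mod_cast hcard
          · positivity
      _ = 2 * ((Nat.sqrt N * Nat.sqrt N : ℕ) : ℝ) * Real.log 4 := by push_cast; ring
      _ ≤ 2 * N * Real.log 4 := by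
          have h1 : Nat.sqrt N * Nat.sqrt N ≤ N := by have := Nat.sqrt_le' N; nlinarith [this]
          have hl : (0:ℝ) ≤ Real.log 4 := Real.log_nonneg (by norm_num)
          have h2 : ((Nat.sqrt N * Nat.sqrt N : ℕ):ℝ) ≤ (N:ℝ) := by exact_mod_cast h1
          nlinarith [h2, hl]
  have hlog4 : Real.log 4 < 1.39 := by
    have h : (4:ℝ) = 2^2 := by norm_num
    rw [h, Real.log_pow]
    have := Real.log_two_lt_d9
    push_cast
    nlinarith [this]
  have hlog4' : (0:ℝ) ≤ Real.log 4 := Real.log_nonneg (by norm_num)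
  have hN1 : (1:ℝ) ≤ (N:ℝ) := by exact_mod_cast hN
  nlinarith [hprime, hnonprime, hlog4, hlog4', hN1]

lemma sum_mangoldt_floor_eq (N : ℕ) :
    ∑ q ∈ Finset.Icc 1 N, Λ q * ((N / q : ℕ) : ℝ) = ∑ m ∈ Finset.Icc 1 N, Real.log m := by
  have lhs : ∑ q ∈ Finset.Icc 1 N, Λ q * ((N / q : ℕ) : ℝ)
      = ∑ x ∈ (Finset.Icc 1 N).sigma (fun q => Finset.Icc 1 (N / q)), Λ x.1 := by
    rw [Finset.sum_sigma]
    apply Finset.sum_congr rfl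
    intro q _
    simp only [Finset.sum_const, Nat.card_Icc, nsmul_eq_mul]
    simp [mul_comm]
  have rhs : ∑ m ∈ Finset.Icc 1 N, Real.log m
      = ∑ x ∈ (Finset.Icc 1 N).sigma (fun m => m.divisors), Λ x.2 := by
    rw [Finset.sum_sigma]
    apply Finset.sum_congr rfl
    intro m _
    exact (vonMangoldt_sum).symm
  rw [lhs, rhs]
  apply Finset.sum_nbij' (i := fun x => ⟨x.1 * x.2, x.1⟩) (j := fun x => ⟨x.2, x.1 / x.2⟩)
  · rintro ⟨q, k⟩ hx
    simp only [Finset.mem_sigma, Finset.mem_Icc] at hx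
    obtain ⟨⟨hq1, hqN⟩, hk1, hkq⟩ := hx
    simp only [Finset.mem_sigma, Finset.mem_Icc, Nat.mem_divisors]
    refine ⟨⟨Nat.one_le_iff_ne_zero.mpr (by positivity), ?_⟩, ⟨k, rfl⟩, by positivity⟩
    calc q * k ≤ q * (N / q) := Nat.mul_le_mul_left q hkq
      _ ≤ N := Nat.mul_div_le N q
  · rintro ⟨m, d⟩ hx
    simp only [Finset.mem_sigma, Finset.mem_Icc, Nat.mem_divisors] at hx
    obtain ⟨⟨hm1, hmN⟩, hdm, hm0⟩ := hx
    have hd0 : 0 < d := Nat.pos_of_dvd_of_pos hdm (by omega)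
    simp only [Finset.mem_sigma, Finset.mem_Icc]
    refine ⟨⟨hd0, le_trans (Nat.le_of_dvd (by omega) hdm) hmN⟩, ?_, Nat.div_le_div_right hmN⟩
    exact Nat.one_le_div_iff hd0 |>.mpr (Nat.le_of_dvd (by omega) hdm)
  · rintro ⟨q, k⟩ hx
    simp only [Finset.mem_sigma, Finset.mem_Icc] at hx
    have hq : 0 < q := hx.1.1
    simp [Nat.mul_div_cancel_left _ hq]
  · rintro ⟨m, d⟩ hx
    simp only [Finset.mem_sigma, Finset.mem_Icc, Nat.mem_divisors] at hx
    simp [Nat.mul_div_cancel' hx.2.1]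
  · rintro ⟨q, k⟩ _
    rfl

lemma sum_log_le (N : ℕ) : ∑ m ∈ Finset.Icc 1 N, Real.log m ≤ N * Real.log N := by
  calc ∑ m ∈ Finset.Icc 1 N, Real.log m ≤ ∑ m ∈ Finset.Icc 1 N, Real.log N := by
        apply Finset.sum_le_sum
        intro m hm
        have := Finset.mem_Icc.mp hm
        apply Real.log_le_log (by exact_mod_cast this.1) (by exact_mod_cast this.2)
    _ = N * Real.log N := by
        rw [Finset.sum_const, Nat.card_Icc, nsmul_eq_mul]
        norm_num

lemma mertens1 (N : ℕ) (hN : 1 ≤ N) :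
    ∑ q ∈ Finset.Icc 1 N, Λ q / q ≤ Real.log N + 5 := by
  have hN0 : (0:ℝ) < N := by exact_mod_cast hN
  rw [← mul_le_mul_iff_right₀ hN0]
  have step1 : (N:ℝ) * ∑ q ∈ Finset.Icc 1 N, Λ q / q
      = ∑ q ∈ Finset.Icc 1 N, Λ q * ((N:ℝ) / q) := by
    rw [Finset.mul_sum]
    apply Finset.sum_congr rfl
    intro q _
    ring
  rw [step1]
  have step2 : ∑ q ∈ Finset.Icc 1 N, Λ q * ((N:ℝ) / q)
      ≤ ∑ q ∈ Finset.Icc 1 N, Λ q * (((N / q : ℕ) : ℝ) + 1) := by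
    apply Finset.sum_le_sum
    intro q hq
    have hq1 : 1 ≤ q := (Finset.mem_Icc.mp hq).1
    have hq0 : (0:ℝ) < q := by exact_mod_cast hq1
    apply mul_le_mul_of_nonneg_left _ vonMangoldt_nonneg
    rw [div_le_iff₀ hq0]
    have hdm := Nat.div_add_mod N q
    have hmod : N % q < q := Nat.mod_lt N (by omega)
    have : (N:ℝ) = q * (N / q : ℕ) + (N % q : ℕ) := by exact_mod_cast hdm.symm
    rw [this]
    have : ((N % q : ℕ):ℝ) < q := by exact_mod_cast hmod
    nlinarith [this]
  refine step2.trans ?_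
  have step3 : ∑ q ∈ Finset.Icc 1 N, Λ q * (((N / q : ℕ) : ℝ) + 1)
      = ∑ m ∈ Finset.Icc 1 N, Real.log m + ∑ q ∈ Finset.Icc 1 N, Λ q := by
    rw [← sum_mangoldt_floor_eq]
    rw [← Finset.sum_add_distrib]
    apply Finset.sum_congr rfl
    intro q _
    ring
  rw [step3]
  have := psi_le N
  have := sum_log_le N
  nlinarith [this]

lemma sum_recip_primes (N : ℕ) (hN : 2 ≤ N) :
    ∑ p ∈ (Finset.range (N+1)).filter Nat.Prime, 1/(p:ℝ)
      ≤ Real.log (Real.log N) + 19 := by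
  set PB := (Finset.range (N+1)).filter Nat.Prime with hPB
  set J := Nat.log 2 N with hJdef
  have hJ1 : 1 ≤ J := by
    rw [hJdef]
    have : 2^1 ≤ N := by omega
    exact (Nat.le_log_iff_pow_le one_lt_two (by omega)).mpr this
  have hJR : (1:ℝ) ≤ (J:ℝ) := by exact_mod_cast hJ1
  have hlog2 : (0:ℝ) < Real.log 2 := Real.log_pos (by norm_num)
  set D : ℕ → ℝ := fun j => ∑ p ∈ PB.filter (fun p => Nat.log 2 p = j), Λ p / p with hD
  have hD0 : ∀ j, 0 ≤ D j := by
    intro j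
    apply Finset.sum_nonneg
    intro p _
    exact div_nonneg vonMangoldt_nonneg (Nat.cast_nonneg p)
  have hPBmem : ∀ p ∈ PB, p.Prime ∧ 2 ≤ p ∧ p ≤ N := by
    intro p hp
    rw [hPB, Finset.mem_filter, Finset.mem_range] at hp
    exact ⟨hp.2, hp.2.two_le, by omega⟩
  have hfib : ∀ p ∈ PB, Nat.log 2 p ∈ Finset.Icc 1 J := by
    intro p hp
    obtain ⟨hp1, hp2, hp3⟩ := hPBmem p hp
    rw [Finset.mem_Icc]
    constructor
    · exact (Nat.le_log_iff_pow_le one_lt_two (by omega)).mpr (by simpa using hp2)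
    · exact Nat.log_mono_right hp3
  -- partial sums bound
  have Mpartial : ∀ k : ℕ, ∑ j ∈ Finset.Icc 1 k, D j ≤ (k+1) * Real.log 2 + 5 := by
    intro k
    have hsplit : ∑ j ∈ Finset.Icc 1 k, D j
        = ∑ p ∈ PB.filter (fun p => Nat.log 2 p ∈ Finset.Icc 1 k), Λ p / p := by
      rw [← Finset.sum_fiberwise_of_maps_to (fun p hp => (Finset.mem_filter.mp hp).2) (fun p => Λ p / p)]
      apply Finset.sum_congr rfl
      intro j hj
      apply Finset.sum_congr _ (fun _ _ => rfl)
      ext p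
      constructor
      · intro hp
        have h1 := Finset.mem_filter.mp hp
        exact Finset.mem_filter.mpr ⟨Finset.mem_filter.mpr ⟨h1.1, h1.2 ▸ hj⟩, h1.2⟩
      · intro hp
        have h1 := Finset.mem_filter.mp hp
        have h2 := Finset.mem_filter.mp h1.1
        exact Finset.mem_filter.mpr ⟨h2.1, h1.2⟩
    rw [hsplit]
    have hsubset : PB.filter (fun p => Nat.log 2 p ∈ Finset.Icc 1 k)
        ⊆ Finset.Icc 1 (2^(k+1)) := by
      intro p hp
      rw [Finset.mem_filter] at hp
      obtain ⟨hp1, hp2, hp3⟩ := hPBmem p hp.1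
      have hlogk : Nat.log 2 p ≤ k := (Finset.mem_Icc.mp hp.2).2
      have : p < 2^(Nat.log 2 p + 1) := Nat.lt_pow_succ_log_self one_lt_two p
      have : p < 2^(k+1) := lt_of_lt_of_le this (Nat.pow_le_pow_right (by omega) (by omega))
      rw [Finset.mem_Icc]
      omega
    calc ∑ p ∈ PB.filter (fun p => Nat.log 2 p ∈ Finset.Icc 1 k), Λ p / p
        ≤ ∑ q ∈ Finset.Icc 1 (2^(k+1)), Λ q / q := by
          apply Finset.sum_le_sum_of_subset_of_nonneg hsubset
          intro q _ _
          exact div_nonneg vonMangoldt_nonneg (Nat.cast_nonneg q)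
      _ ≤ Real.log ((2^(k+1) : ℕ) : ℝ) + 5 := mertens1 _ (Nat.one_le_two_pow)
      _ = (k+1) * Real.log 2 + 5 := by
          push_cast
          rw [Real.log_pow]
          push_cast
          ring
  -- Abel summation
  have abel : ∑ j ∈ Finset.Icc 1 J, D j * (1/(j:ℝ))
      ≤ 3 * Real.log 2 + 10 + Real.log 2 * Real.log J := by
    have hexp : ∀ j ∈ Finset.Icc 1 J, D j * (1/(j:ℝ))
        = D j * (1/(J:ℝ)) + ∑ i ∈ Finset.Ico j J, D j * ((1:ℝ)/i - 1/(i+1)) := by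
      intro j hj
      rw [Finset.mem_Icc] at hj
      rw [← Finset.mul_sum, telescope j J hj.1 hj.2]
      ring
    rw [Finset.sum_congr rfl hexp, Finset.sum_add_distrib]
    have part1 : ∑ j ∈ Finset.Icc 1 J, D j * (1/(J:ℝ)) ≤ 2 * Real.log 2 + 5 := by
      rw [← Finset.sum_mul]
      have h1 := Mpartial J
      have h2 : (0:ℝ) ≤ ∑ j ∈ Finset.Icc 1 J, D j := Finset.sum_nonneg (fun j _ => hD0 j)
      calc (∑ j ∈ Finset.Icc 1 J, D j) * (1/(J:ℝ)) ≤ ((J+1) * Real.log 2 + 5) * (1/(J:ℝ)) := by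
            apply mul_le_mul_of_nonneg_right h1
            positivity
        _ ≤ 2 * Real.log 2 + 5 := by
            rw [mul_one_div, div_le_iff₀ (by linarith)]
            nlinarith [hJR, hlog2.le]
    have part2 : ∑ j ∈ Finset.Icc 1 J, ∑ i ∈ Finset.Ico j J, D j * ((1:ℝ)/i - 1/(i+1))
        ≤ Real.log 2 + Real.log 2 * Real.log J + 5 := by
      rw [swap_triangle]
      have hbd : ∀ i ∈ Finset.Ico 1 J, ∑ j ∈ Finset.Icc 1 i, D j * ((1:ℝ)/i - 1/(i+1))
          ≤ Real.log 2 * (1/(i:ℝ)) + 5 * ((1:ℝ)/i - 1/(i+1)) := by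
        intro i hi
        rw [Finset.mem_Ico] at hi
        have hi1 : (1:ℝ) ≤ (i:ℝ) := by exact_mod_cast hi.1
        have hpos : (0:ℝ) ≤ (1:ℝ)/i - 1/(i+1) := by
          rw [sub_nonneg]
          apply div_le_div_of_nonneg_left one_pos.le (by linarith) (by linarith)
        rw [← Finset.sum_mul]
        calc (∑ j ∈ Finset.Icc 1 i, D j) * ((1:ℝ)/i - 1/(i+1))
            ≤ ((i+1) * Real.log 2 + 5) * ((1:ℝ)/i - 1/(i+1)) :=
              mul_le_mul_of_nonneg_right (Mpartial i) hpos
          _ = Real.log 2 * (1/(i:ℝ)) + 5 * ((1:ℝ)/i - 1/(i+1)) := by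
              have hne : (i:ℝ) ≠ 0 := by linarith
              have hne2 : (i:ℝ) + 1 ≠ 0 := by linarith
              field_simp
              ring
      calc ∑ i ∈ Finset.Ico 1 J, ∑ j ∈ Finset.Icc 1 i, D j * ((1:ℝ)/i - 1/(i+1))
          ≤ ∑ i ∈ Finset.Ico 1 J, (Real.log 2 * (1/(i:ℝ)) + 5 * ((1:ℝ)/i - 1/(i+1))) :=
            Finset.sum_le_sum hbd
        _ = Real.log 2 * (∑ i ∈ Finset.Ico 1 J, (1:ℝ)/i)
            + 5 * ∑ i ∈ Finset.Ico 1 J, ((1:ℝ)/i - 1/(i+1)) := by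
            rw [Finset.sum_add_distrib, Finset.mul_sum, Finset.mul_sum]
        _ ≤ Real.log 2 * (1 + Real.log J) + 5 * 1 := by
            apply add_le_add
            · exact mul_le_mul_of_nonneg_left (harmonic_bound J hJ1) hlog2.le
            · rw [telescope 1 J le_rfl hJ1]
              have : (0:ℝ) < 1/(J:ℝ) := by positivity
              nlinarith
        _ = Real.log 2 + Real.log 2 * Real.log J + 5 := by ring
    linarith
  -- per-fiber bound
  have fiber : ∀ j ∈ Finset.Icc 1 J, ∑ p ∈ PB.filter (fun p => Nat.log 2 p = j), 1/(p:ℝ)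
      ≤ (1/Real.log 2) * (D j * (1/(j:ℝ))) := by
    intro j hj
    have hj1 : 1 ≤ j := (Finset.mem_Icc.mp hj).1
    have hjR : (1:ℝ) ≤ (j:ℝ) := by exact_mod_cast hj1
    have hjpos : (0:ℝ) < (j:ℝ) * Real.log 2 := by positivity
    calc ∑ p ∈ PB.filter (fun p => Nat.log 2 p = j), 1/(p:ℝ)
        ≤ ∑ p ∈ PB.filter (fun p => Nat.log 2 p = j), (Λ p / p) * (1/((j:ℝ) * Real.log 2)) := by
          apply Finset.sum_le_sum
          intro p hp
          rw [Finset.mem_filter] at hp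
          obtain ⟨hp1, hp2, hp3⟩ := hPBmem p hp.1
          have hpR : (0:ℝ) < (p:ℝ) := by exact_mod_cast hp1.pos
          have hlam : Λ p = Real.log p := vonMangoldt_apply_prime hp1
          have hplow : (2:ℕ)^j ≤ p := hp.2 ▸ Nat.pow_log_le_self 2 (by omega)
          have hlogp : (j:ℝ) * Real.log 2 ≤ Λ p := by
            have hc : ((2:ℕ)^j : ℝ) ≤ (p:ℝ) := by exact_mod_cast hplow
            rw [hlam]
            calc (j:ℝ) * Real.log 2 = Real.log ((2:ℝ)^j) := by rw [Real.log_pow]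
              _ ≤ Real.log p := Real.log_le_log (by positivity) (by push_cast at hc ⊢; exact hc)
          calc 1/(p:ℝ) = ((j:ℝ)*Real.log 2)/(((j:ℝ)*Real.log 2)*p) := by
                field_simp
            _ ≤ Λ p/(((j:ℝ)*Real.log 2)*p) := by
                apply div_le_div_of_nonneg_right hlogp ?_ |>.trans_eq rfl
                positivity
            _ = (Λ p/p) * (1/((j:ℝ)*Real.log 2)) := by ring
      _ = (1/Real.log 2) * (D j * (1/(j:ℝ))) := by
          rw [← Finset.sum_mul, hD]
          ring
  -- final assembly
  have main : ∑ p ∈ PB, 1/(p:ℝ) ≤ (1/Real.log 2) * (3 * Real.log 2 + 10 + Real.log 2 * Real.log J) := by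
    rw [← Finset.sum_fiberwise_of_maps_to hfib (fun p => 1/(p:ℝ))]
    calc ∑ j ∈ Finset.Icc 1 J, ∑ p ∈ PB.filter (fun p => Nat.log 2 p = j), 1/(p:ℝ)
        ≤ ∑ j ∈ Finset.Icc 1 J, (1/Real.log 2) * (D j * (1/(j:ℝ))) := Finset.sum_le_sum fiber
      _ = (1/Real.log 2) * ∑ j ∈ Finset.Icc 1 J, D j * (1/(j:ℝ)) := by rw [Finset.mul_sum]
      _ ≤ (1/Real.log 2) * (3 * Real.log 2 + 10 + Real.log 2 * Real.log J) := by
          apply mul_le_mul_of_nonneg_left abel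
          positivity
  have hlogJ : Real.log J ≤ Real.log (Real.log N) + 1 := by
    have hpow : (2:ℕ)^J ≤ N := Nat.pow_log_le_self 2 (by omega)
    have hJle : (J:ℝ) * Real.log 2 ≤ Real.log N := by
      have hc : ((2:ℕ)^J : ℝ) ≤ (N:ℝ) := by exact_mod_cast hpow
      calc (J:ℝ) * Real.log 2 = Real.log ((2:ℝ)^J) := by rw [Real.log_pow]
        _ ≤ Real.log N := Real.log_le_log (by positivity) (by push_cast at hc ⊢; exact hc)
    have hJle2 : (J:ℝ) ≤ Real.log N / Real.log 2 := by
      rw [le_div_iff₀ hlog2]; exact hJle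
    have hlogN : (0:ℝ) < Real.log N := by
      apply Real.log_pos
      exact_mod_cast by omega
    have h1 : Real.log J ≤ Real.log (Real.log N / Real.log 2) :=
      Real.log_le_log (by linarith) hJle2
    rw [Real.log_div hlogN.ne' hlog2.ne'] at h1
    have h2 : -Real.log (Real.log 2) ≤ 1 := by
      have he : Real.exp (-1) ≤ Real.log 2 := by
        rw [Real.exp_neg]
        have h3 : (2:ℝ) ≤ Real.exp 1 := by
          have := Real.exp_one_gt_d9
          linarith
        have h4 : (Real.exp 1)⁻¹ ≤ (2:ℝ)⁻¹ := by
          apply inv_anti₀ (by norm_num) h3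
        have h5 : ((2:ℝ))⁻¹ ≤ Real.log 2 := by
          have := Real.log_two_gt_d9
          norm_num
          linarith
        linarith
      have h6 : -1 ≤ Real.log (Real.log 2) := by
        rw [← Real.log_exp (-1)]
        exact Real.log_le_log (Real.exp_pos _) he
      linarith
    linarith
  have hl2 : (0.6931471803:ℝ) < Real.log 2 := Real.log_two_gt_d9
  calc ∑ p ∈ PB, 1/(p:ℝ) ≤ (1/Real.log 2) * (3 * Real.log 2 + 10 + Real.log 2 * Real.log J) := main
    _ = 3 + 10/Real.log 2 + Real.log J := by field_simp
    _ ≤ 3 + 15 + (Real.log (Real.log N) + 1) := by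
        have h10 : 10/Real.log 2 ≤ 15 := by
          rw [div_le_iff₀ hlog2]
          nlinarith
        linarith
    _ = Real.log (Real.log N) + 19 := by ring

lemma sum_inv_sq (N : ℕ) (hN : 1 ≤ N) :
    ∑ k ∈ Finset.Icc 2 N, (1:ℝ)/((k:ℝ)*(k:ℝ)) ≤ 1 - 1/(N:ℝ) := by
  induction N with
  | zero => omega
  | succ N ih =>
    rcases Nat.lt_or_ge N 1 with h | h
    · have : N = 0 := by omega
      subst this
      simp
    · have h2 : 2 ≤ N + 1 := by omega
      rw [Finset.sum_Icc_succ_top h2]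
      have hNR : (1:ℝ) ≤ (N:ℝ) := by exact_mod_cast h
      have step : (1:ℝ)/((N+1:ℕ):ℝ) + 1/(((N+1:ℕ):ℝ)*((N+1:ℕ):ℝ)) ≤ 1/(N:ℝ) := by
        push_cast
        rw [div_add_div _ _ (by linarith) (by nlinarith), div_le_div_iff₀ (by nlinarith) (by linarith)]
        nlinarith
      have := ih h
      push_cast at step ⊢
      linarith

lemma mertens3 (N : ℕ) (hN : 2 ≤ N) :
    ∏ p ∈ (Finset.range (N+1)).filter Nat.Prime, (1 - 1/(p:ℝ))⁻¹
      ≤ Real.exp 21 * Real.log N := by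
  set PB := (Finset.range (N+1)).filter Nat.Prime with hPB
  have hPBmem : ∀ p ∈ PB, p.Prime ∧ 2 ≤ p ∧ p ≤ N := by
    intro p hp
    rw [hPB, Finset.mem_filter, Finset.mem_range] at hp
    exact ⟨hp.2, hp.2.two_le, by omega⟩
  have hpos : ∀ p ∈ PB, (0:ℝ) < 1 - 1/(p:ℝ) := by
    intro p hp
    obtain ⟨_, hp2, _⟩ := hPBmem p hp
    have : (2:ℝ) ≤ (p:ℝ) := by exact_mod_cast hp2
    have h1 : 1/(p:ℝ) ≤ 1/2 := by
      apply div_le_div_of_nonneg_left one_pos.le (by norm_num) this |>.trans_eq rfl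
    linarith
  have hexp : ∏ p ∈ PB, (1 - 1/(p:ℝ))⁻¹
      = Real.exp (∑ p ∈ PB, Real.log ((1 - 1/(p:ℝ))⁻¹)) := by
    rw [Real.exp_sum]
    apply Finset.prod_congr rfl
    intro p hp
    exact (Real.exp_log (inv_pos.mpr (hpos p hp))).symm
  have hterm : ∀ p ∈ PB, Real.log ((1 - 1/(p:ℝ))⁻¹) ≤ 1/(p:ℝ) + 2/((p:ℝ)*(p:ℝ)) := by
    intro p hp
    obtain ⟨hp1, hp2, _⟩ := hPBmem p hp
    have hpR : (2:ℝ) ≤ (p:ℝ) := by exact_mod_cast hp2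
    have h0 : (0:ℝ) < (p:ℝ) := by linarith
    have h1 : (0:ℝ) < (p:ℝ) - 1 := by linarith
    have heq : (1 - 1/(p:ℝ))⁻¹ = 1 + 1/((p:ℝ)-1) := by
      field_simp
      ring
    rw [heq]
    have hlog : Real.log (1 + 1/((p:ℝ)-1)) ≤ 1/((p:ℝ)-1) := by
      have := Real.log_le_sub_one_of_pos (show (0:ℝ) < 1 + 1/((p:ℝ)-1) by positivity)
      linarith
    have key : 1/((p:ℝ)-1) ≤ 1/(p:ℝ) + 2/((p:ℝ)*(p:ℝ)) := by
      rw [div_add_div _ _ (ne_of_gt h0) (by positivity), div_le_div_iff₀ h1 (by positivity)]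
      nlinarith
    linarith
  have hsum : ∑ p ∈ PB, Real.log ((1 - 1/(p:ℝ))⁻¹)
      ≤ Real.log (Real.log N) + 21 := by
    calc ∑ p ∈ PB, Real.log ((1 - 1/(p:ℝ))⁻¹)
        ≤ ∑ p ∈ PB, (1/(p:ℝ) + 2/((p:ℝ)*(p:ℝ))) := Finset.sum_le_sum hterm
      _ = ∑ p ∈ PB, 1/(p:ℝ) + ∑ p ∈ PB, 2/((p:ℝ)*(p:ℝ)) := Finset.sum_add_distrib
      _ ≤ (Real.log (Real.log N) + 19) + 2 := by
          apply add_le_add (sum_recip_primes N hN)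
          have hsub : PB ⊆ Finset.Icc 2 N := by
            intro p hp
            obtain ⟨_, hp2, hp3⟩ := hPBmem p hp
            rw [Finset.mem_Icc]; exact ⟨hp2, hp3⟩
          calc ∑ p ∈ PB, 2/((p:ℝ)*(p:ℝ))
              ≤ ∑ k ∈ Finset.Icc 2 N, 2/((k:ℝ)*(k:ℝ)) := by
                apply Finset.sum_le_sum_of_subset_of_nonneg hsub
                intro k hk _
                have : 2 ≤ k := (Finset.mem_Icc.mp hk).1
                positivity
            _ = 2 * ∑ k ∈ Finset.Icc 2 N, 1/((k:ℝ)*(k:ℝ)) := by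
                rw [Finset.mul_sum]
                apply Finset.sum_congr rfl
                intro k _
                ring
            _ ≤ 2 * (1 - 1/(N:ℝ)) := by
                apply mul_le_mul_of_nonneg_left (sum_inv_sq N (by omega)) (by norm_num)
            _ ≤ 2 := by
                have : (0:ℝ) < 1/(N:ℝ) := by positivity
                linarith
      _ = Real.log (Real.log N) + 21 := by ring
  rw [hexp]
  have hlogN : (0:ℝ) < Real.log N := Real.log_pos (by exact_mod_cast by omega)
  calc Real.exp (∑ p ∈ PB, Real.log ((1 - 1/(p:ℝ))⁻¹))
      ≤ Real.exp (Real.log (Real.log N) + 21) := Real.exp_le_exp.mpr hsum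
    _ = Real.exp 21 * Real.log N := by
        rw [Real.exp_add, Real.exp_log hlogN]
        ring

lemma finset_geom (T : Finset ℕ) (x : ℝ) (h0 : 0 ≤ x) (h1 : x < 1) :
    ∑ a ∈ T, x^a ≤ (1-x)⁻¹ := by
  have hx : (0:ℝ) < 1 - x := by linarith
  rcases T.eq_empty_or_nonempty with rfl | hT
  · rw [Finset.sum_empty]; positivity
  · set n := T.max' hT + 1 with hn
    have hsub : T ⊆ Finset.range n := by
      intro a ha
      rw [Finset.mem_range, hn]
      exact Nat.lt_succ_of_le (Finset.le_max' T a ha)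
    calc ∑ a ∈ T, x^a ≤ ∑ a ∈ Finset.range n, x^a :=
          Finset.sum_le_sum_of_subset_of_nonneg hsub (fun a _ _ => pow_nonneg h0 a)
      _ = (1 - x^n)/(1-x) := by
          rw [geom_sum_eq (by linarith)]
          rw [div_eq_div_iff (by linarith) hx.ne']
          ring
      _ ≤ (1-x)⁻¹ := by
          rw [div_le_iff₀ hx, inv_mul_cancel₀ hx.ne']
          have : (0:ℝ) ≤ x^n := pow_nonneg h0 n
          linarith

lemma sum_inv_le_prod : ∀ (Q : Finset ℕ), (∀ p ∈ Q, p.Prime) →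
    ∀ S : Finset ℕ, (∀ m ∈ S, 1 ≤ m ∧ m.primeFactors ⊆ Q) →
    ∑ m ∈ S, (1:ℝ)/m ≤ ∏ p ∈ Q, (1 - 1/(p:ℝ))⁻¹ := by
  intro Q
  induction Q using Finset.induction_on with
  | empty =>
    intro _ S hS
    have hsub : S ⊆ {1} := by
      intro m hm
      obtain ⟨h1, h2⟩ := hS m hm
      have : m.primeFactors = ∅ := Finset.subset_empty.mp h2
      rw [Finset.mem_singleton]
      rcases Nat.primeFactors_eq_empty.mp this with h | h
      · omega
      · exact h
    calc ∑ m ∈ S, (1:ℝ)/m ≤ ∑ m ∈ ({1} : Finset ℕ), (1:ℝ)/m := by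
          apply Finset.sum_le_sum_of_subset_of_nonneg hsub
          intro m _ _; positivity
      _ = 1 := by norm_num
      _ = ∏ p ∈ (∅ : Finset ℕ), (1 - 1/(p:ℝ))⁻¹ := by simp
  | @insert pr Q' hpQ ih =>
    intro hQ S hS
    have hp : pr.Prime := hQ pr (Finset.mem_insert_self pr Q')
    have hQ' : ∀ r ∈ Q', r.Prime := fun r hq => hQ r (Finset.mem_insert_of_mem hq)
    have hpR : (2:ℝ) ≤ (pr:ℝ) := by exact_mod_cast hp.two_le
    have hW'pos : (0:ℝ) < ∏ r ∈ Q', (1 - 1/(r:ℝ))⁻¹ := by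
      apply Finset.prod_pos
      intro r hq
      have : (2:ℝ) ≤ (r:ℝ) := by exact_mod_cast (hQ' r hq).two_le
      have h1 : 1/(r:ℝ) < 1 := by
        rw [div_lt_one (by linarith)]; linarith
      rw [inv_pos]; linarith
    set W' := ∏ r ∈ Q', (1 - 1/(r:ℝ))⁻¹ with hW'
    rw [← Finset.sum_fiberwise_of_maps_to
      (g := fun m : ℕ => m.factorization pr)
      (fun m hm => Finset.mem_image_of_mem _ hm) (fun m : ℕ => (1:ℝ)/(m:ℝ))]
    have inner : ∀ a ∈ S.image (fun m => m.factorization pr),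
        ∑ m ∈ S.filter (fun m => m.factorization pr = a), (1:ℝ)/m
          ≤ (1/(pr:ℝ))^a * W' := by
      intro a _
      set Sa := S.filter (fun m => m.factorization pr = a) with hSa
      have hdvd : ∀ m ∈ Sa, pr^a ∣ m ∧ m = pr^a * (m / pr^a) := by
        intro m hm
        rw [hSa, Finset.mem_filter] at hm
        have := Nat.ordProj_dvd m pr
        rw [hm.2] at this
        exact ⟨this, (Nat.mul_div_cancel' this).symm⟩
      have hinj : ∀ m₁ ∈ Sa, ∀ m₂ ∈ Sa, m₁ / pr^a = m₂ / pr^a → m₁ = m₂ := by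
        intro m₁ h₁ m₂ h₂ h
        have e₁ := (hdvd m₁ h₁).2
        have e₂ := (hdvd m₂ h₂).2
        rw [e₁, e₂, h]
      have hsum : ∑ m ∈ Sa, (1:ℝ)/m
          = ∑ m' ∈ Sa.image (fun m => m / pr^a), (1:ℝ)/((pr:ℝ)^a * m') := by
        rw [Finset.sum_image hinj]
        apply Finset.sum_congr rfl
        intro m hm
        have e := (hdvd m hm).2
        congr 1
        rw [← Nat.cast_pow, ← Nat.cast_mul, ← e]
      rw [hsum]
      have hpa : (0:ℝ) < (pr:ℝ)^a := by positivity
      have step : ∑ m' ∈ Sa.image (fun m => m / pr^a), (1:ℝ)/((pr:ℝ)^a * m')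
          = (1/(pr:ℝ))^a * ∑ m' ∈ Sa.image (fun m => m / pr^a), (1:ℝ)/m' := by
        rw [Finset.mul_sum]
        apply Finset.sum_congr rfl
        intro m' _
        rw [div_pow, one_pow]
        rw [div_mul_div_comm, one_mul]
      rw [step]
      apply mul_le_mul_of_nonneg_left _ (by positivity)
      apply ih hQ'
      intro m' hm'
      rw [Finset.mem_image] at hm'
      obtain ⟨m, hm, rfl⟩ := hm'
      have hmem := Finset.mem_filter.mp (hSa ▸ hm)
      obtain ⟨hm1, hmP⟩ := hS m hmem.1
      have hdvd' := (hdvd m hm).1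
      have heq := (hdvd m hm).2
      constructor
      · rcases Nat.eq_zero_or_pos (m / pr^a) with h | h
        · rw [h, mul_zero] at heq; omega
        · exact h
      · intro r hq
        have hq' : r ∈ (m / pr^a).primeFactors := hq
        rw [Nat.mem_primeFactors] at hq'
        obtain ⟨hqp, hqdvd, hne⟩ := hq'
        have hqm : r ∣ m := hqdvd.trans (Nat.div_dvd_of_dvd hdvd')
        have hqQ : r ∈ insert pr Q' := hmP (Nat.mem_primeFactors.mpr ⟨hqp, hqm, by omega⟩)
        have hqnep : r ≠ pr := by
          intro h
          rw [h] at hqdvd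
          have hfact : (m / pr^a).factorization pr = 0 := by
            rw [Nat.factorization_div hdvd']
            simp only [Finsupp.coe_tsub, Pi.sub_apply]
            rw [hp.factorization_pow]
            simp only [Finsupp.single_eq_same]
            rw [hmem.2]
            omega
          have := (Nat.Prime.dvd_iff_one_le_factorization hp hne).mp hqdvd
          omega
        rcases Finset.mem_insert.mp hqQ with h | h
        · exact absurd h hqnep
        · exact h
    calc ∑ a ∈ S.image (fun m => m.factorization pr),
          ∑ m ∈ S.filter (fun m => m.factorization pr = a), (1:ℝ)/m
        ≤ ∑ a ∈ S.image (fun m => m.factorization pr), (1/(pr:ℝ))^a * W' :=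
          Finset.sum_le_sum inner
      _ = (∑ a ∈ S.image (fun m => m.factorization pr), (1/(pr:ℝ))^a) * W' := by
          rw [Finset.sum_mul]
      _ ≤ (1 - 1/(pr:ℝ))⁻¹ * W' := by
          apply mul_le_mul_of_nonneg_right _ hW'pos.le
          apply finset_geom
          · positivity
          · rw [div_lt_one (by linarith)]; linarith
      _ = ∏ r ∈ insert pr Q', (1 - 1/(r:ℝ))⁻¹ := by rw [hW', Finset.prod_insert hpQ]

lemma key_log (n : ℕ) (S : Finset ℕ) (hS : S ⊆ Finset.Icc 1 n)
    (hclosed : ∀ m ∈ S, ∀ k, k ∣ m → k ∈ S) :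
    ∑ m ∈ S, Real.log m ≤ ∑ k ∈ S, ∑ q ∈ Finset.Icc 1 (n / k), Λ q := by
  have lhs : ∑ m ∈ S, Real.log m = ∑ x ∈ S.sigma (fun m => m.divisors), Λ x.2 := by
    rw [Finset.sum_sigma]
    apply Finset.sum_congr rfl
    intro m _
    exact vonMangoldt_sum.symm
  have rhs : ∑ k ∈ S, ∑ q ∈ Finset.Icc 1 (n / k), Λ q
      = ∑ x ∈ S.sigma (fun k => Finset.Icc 1 (n / k)), Λ x.2 := by
    rw [Finset.sum_sigma]
  rw [lhs, rhs]
  apply sum_le_sum_inj _ _ (fun x => ⟨x.1 / x.2, x.2⟩) _ _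
  · rintro ⟨m₁, q₁⟩ h₁ ⟨m₂, q₂⟩ h₂ h
    simp only [Finset.mem_sigma, Nat.mem_divisors] at h₁ h₂
    rw [Sigma.ext_iff] at h
    obtain ⟨hdiv, hsnd⟩ := h
    have hq : q₁ = q₂ := eq_of_heq hsnd
    subst hq
    have e₁ : q₁ * (m₁ / q₁) = m₁ := Nat.mul_div_cancel' h₁.2.1
    have e₂ : q₁ * (m₂ / q₁) = m₂ := Nat.mul_div_cancel' h₂.2.1
    have hdiv' : m₁ / q₁ = m₂ / q₁ := hdiv
    have : m₁ = m₂ := by rw [← e₁, ← e₂, hdiv']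
    simp [this]
  · rintro ⟨m, q⟩ hx
    simp only [Finset.mem_sigma, Nat.mem_divisors] at hx
    obtain ⟨hmS, hqm, hm0⟩ := hx
    have hmIcc := Finset.mem_Icc.mp (hS hmS)
    have hq0 : 0 < q := Nat.pos_of_dvd_of_pos hqm (by omega)
    have hk : m / q ∈ S := hclosed m hmS (m / q) (Nat.div_dvd_of_dvd hqm)
    have hk0 : 0 < m / q := Nat.div_pos (Nat.le_of_dvd (by omega) hqm) hq0
    simp only [Finset.mem_sigma, Finset.mem_Icc]
    refine ⟨hk, hq0, ?_⟩
    rw [Nat.le_div_iff_mul_le hk0]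
    calc q * (m / q) = m := Nat.mul_div_cancel' hqm
      _ ≤ n := hmIcc.2
  · rintro ⟨m, q⟩ _
    exact le_refl _
  · intro b _
    exact vonMangoldt_nonneg

theorem brun_sieve_bound :
    ∃ c : ℝ, 0 < c ∧ ∀ n : ℕ, 0 < n → ∀ P : Finset ℕ,
      (∀ p ∈ P, Nat.Prime p ∧ p ≤ n) →
      (((Finset.Icc 1 n).filter (fun m => ∀ p ∈ P, ¬ p ∣ m)).card : ℝ)
        ≤ c * (n : ℝ) * ∏ p ∈ P, (1 - 1 / (p : ℝ)) := by
  refine ⟨6 * Real.exp 21, by positivity, ?_⟩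
  intro n hn P hP
  set S := (Finset.Icc 1 n).filter (fun m => ∀ p ∈ P, ¬ p ∣ m) with hSdef
  have hmS : ∀ m ∈ S, 1 ≤ m ∧ m ≤ n ∧ (∀ p ∈ P, ¬ p ∣ m) := by
    intro m hm
    rw [hSdef, Finset.mem_filter, Finset.mem_Icc] at hm
    exact ⟨hm.1.1, hm.1.2, hm.2⟩
  have hPprime : ∀ p ∈ P, Nat.Prime p := fun p hp => (hP p hp).1
  have hprodP_nonneg : (0:ℝ) ≤ ∏ p ∈ P, (1 - 1 / (p : ℝ)) := by
    apply Finset.prod_nonneg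
    intro p hp
    have h2 : (2:ℝ) ≤ (p:ℝ) := by exact_mod_cast (hPprime p hp).two_le
    have : 1/(p:ℝ) ≤ 1/2 := by
      apply div_le_div_of_nonneg_left one_pos.le (by norm_num) h2 |>.trans_eq rfl
    linarith
  rcases Nat.lt_or_ge n 2 with hn2 | hn2
  · -- n = 1
    have hn1 : n = 1 := by omega
    subst hn1
    have hPempty : P = ∅ := by
      apply Finset.eq_empty_of_forall_notMem
      intro p hp
      have := (hP p hp).1.two_le
      have := (hP p hp).2
      omega
    subst hPempty
    rw [Finset.prod_empty, mul_one]
    have hcard : (S.card : ℝ) ≤ 1 := by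
      have hsub : S ⊆ Finset.Icc 1 1 := Finset.filter_subset _ _
      have hc := Finset.card_le_card hsub
      simp only [Nat.card_Icc] at hc
      exact_mod_cast by omega
    have hE : (1:ℝ) ≤ Real.exp 21 := by nlinarith [Real.add_one_le_exp (21:ℝ)]
    push_cast
    nlinarith [hcard, hE]
  · -- main case n ≥ 2
    have hnR : (2:ℝ) ≤ (n:ℝ) := by exact_mod_cast hn2
    have hlogn : (0:ℝ) < Real.log n := Real.log_pos (by linarith)
    set PB := (Finset.range (n+1)).filter Nat.Prime with hPB
    have hPsub : P ⊆ PB := by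
      intro p hp
      rw [hPB, Finset.mem_filter, Finset.mem_range]
      exact ⟨by have := (hP p hp).2; omega, (hP p hp).1⟩
    have hSsub : S ⊆ Finset.Icc 1 n := Finset.filter_subset _ _
    have hclosed : ∀ m ∈ S, ∀ k, k ∣ m → k ∈ S := by
      intro m hm k hk
      obtain ⟨hm1, hm2, hm3⟩ := hmS m hm
      rw [hSdef, Finset.mem_filter, Finset.mem_Icc]
      refine ⟨⟨Nat.pos_of_dvd_of_pos hk (by omega), (Nat.le_of_dvd (by omega) hk).trans hm2⟩, ?_⟩
      intro p hp hpk
      exact hm3 p hp (hpk.trans hk)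
    set H := ∑ m ∈ S, (1:ℝ)/m with hH
    have hH0 : 0 ≤ H := Finset.sum_nonneg (fun m _ => by positivity)
    -- step A : card * log n ≤ 6 n H
    have stepA : (S.card : ℝ) * Real.log n ≤ 6 * n * H := by
      have h1 : (S.card : ℝ) * Real.log n = ∑ m ∈ S, Real.log n := by
        rw [Finset.sum_const, nsmul_eq_mul]
      have h2 : ∑ m ∈ S, Real.log n ≤ ∑ m ∈ S, Real.log m + ∑ m ∈ S, (n:ℝ)/m := by
        rw [← Finset.sum_add_distrib]
        apply Finset.sum_le_sum
        intro m hm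
        obtain ⟨hm1, hm2, _⟩ := hmS m hm
        have hmR : (1:ℝ) ≤ (m:ℝ) := by exact_mod_cast hm1
        have hpos : (0:ℝ) < (n:ℝ)/m := by positivity
        have hlog := Real.log_le_sub_one_of_pos hpos
        rw [Real.log_div (by positivity) (by positivity)] at hlog
        linarith
      have h3 : ∑ m ∈ S, Real.log m ≤ 5 * n * H := by
        calc ∑ m ∈ S, Real.log m ≤ ∑ k ∈ S, ∑ q ∈ Finset.Icc 1 (n / k), Λ q :=
              key_log n S hSsub hclosed
          _ ≤ ∑ k ∈ S, 5 * ((n:ℝ)/k) := by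
              apply Finset.sum_le_sum
              intro k hk
              obtain ⟨hk1, _, _⟩ := hmS k hk
              calc ∑ q ∈ Finset.Icc 1 (n / k), Λ q ≤ 5 * ((n / k : ℕ):ℝ) := psi_le (n/k)
                _ ≤ 5 * ((n:ℝ)/k) := by
                    apply mul_le_mul_of_nonneg_left (Nat.cast_div_le) (by norm_num)
          _ = 5 * n * H := by
              rw [hH, Finset.mul_sum]
              apply Finset.sum_congr rfl
              intro k _
              ring
      have h4 : ∑ m ∈ S, (n:ℝ)/m = n * H := by
        rw [hH, Finset.mul_sum]
        apply Finset.sum_congr rfl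
        intro k _
        ring
      calc (S.card : ℝ) * Real.log n = ∑ m ∈ S, Real.log n := h1
        _ ≤ ∑ m ∈ S, Real.log m + ∑ m ∈ S, (n:ℝ)/m := h2
        _ ≤ 5 * n * H + n * H := by rw [h4]; linarith
        _ = 6 * n * H := by ring
    -- step B : H ≤ prod over PB \ P
    have stepB : H ≤ ∏ p ∈ PB \ P, (1 - 1/(p:ℝ))⁻¹ := by
      apply sum_inv_le_prod
      · intro p hp
        rw [Finset.mem_sdiff, hPB, Finset.mem_filter] at hp
        exact hp.1.2
      · intro m hm
        obtain ⟨hm1, hm2, hm3⟩ := hmS m hm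
        refine ⟨hm1, ?_⟩
        intro r hr
        rw [Nat.mem_primeFactors] at hr
        obtain ⟨hrp, hrm, _⟩ := hr
        rw [Finset.mem_sdiff, hPB, Finset.mem_filter, Finset.mem_range]
        refine ⟨⟨?_, hrp⟩, ?_⟩
        · have := (Nat.le_of_dvd (by omega) hrm).trans hm2
          omega
        · intro hrP
          exact hm3 r hrP hrm
    -- step C : split the product
    have hfacpos : ∀ p ∈ PB, (0:ℝ) < 1 - 1/(p:ℝ) := by
      intro p hp
      rw [hPB, Finset.mem_filter] at hp
      have h2 : (2:ℝ) ≤ (p:ℝ) := by exact_mod_cast hp.2.two_le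
      have : 1/(p:ℝ) ≤ 1/2 := by
        apply div_le_div_of_nonneg_left one_pos.le (by norm_num) h2 |>.trans_eq rfl
      linarith
    have stepC : ∏ p ∈ PB \ P, (1 - 1/(p:ℝ))⁻¹
        = (∏ p ∈ PB, (1 - 1/(p:ℝ))⁻¹) * ∏ p ∈ P, (1 - 1/(p:ℝ)) := by
      have hsd : (∏ p ∈ PB \ P, (1 - 1/(p:ℝ))⁻¹) * ∏ p ∈ P, (1 - 1/(p:ℝ))⁻¹
          = ∏ p ∈ PB, (1 - 1/(p:ℝ))⁻¹ := Finset.prod_sdiff hPsub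
      have hone : (∏ p ∈ P, (1 - 1/(p:ℝ))⁻¹) * ∏ p ∈ P, (1 - 1/(p:ℝ)) = 1 := by
        rw [← Finset.prod_mul_distrib]
        apply Finset.prod_eq_one
        intro p hp
        exact inv_mul_cancel₀ (hfacpos p (hPsub hp)).ne'
      conv_rhs => rw [← hsd]
      rw [mul_assoc, hone, mul_one]
    -- combine
    have final : (S.card : ℝ) * Real.log n
        ≤ (6 * Real.exp 21 * n * ∏ p ∈ P, (1 - 1 / (p:ℝ))) * Real.log n := by
      calc (S.card : ℝ) * Real.log n ≤ 6 * n * H := stepA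
        _ ≤ 6 * n * ((∏ p ∈ PB, (1 - 1/(p:ℝ))⁻¹) * ∏ p ∈ P, (1 - 1/(p:ℝ))) := by
            apply mul_le_mul_of_nonneg_left _ (by positivity)
            rw [← stepC]
            exact stepB
        _ ≤ 6 * n * ((Real.exp 21 * Real.log n) * ∏ p ∈ P, (1 - 1/(p:ℝ))) := by
            apply mul_le_mul_of_nonneg_left _ (by positivity)
            exact mul_le_mul_of_nonneg_right (mertens3 n hn2) hprodP_nonneg
        _ = (6 * Real.exp 21 * n * ∏ p ∈ P, (1 - 1 / (p:ℝ))) * Real.log n := by ring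
    exact le_of_mul_le_mul_right final hlogn
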